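/- Suppose a polynomial R(Z) with real coefficients satisfies R(m) = 0 for some m > 0, has degree at most d_u, and each coefficient r_i satisfies |r_i| < C(d_u, i) · A^(d_u) · B^(d_{P,u}) where A = 2^(τ_{P,u}) √(d_{P,u}+1) and B = 2^(τ_u) √(d_u+1), and moreover the lowest nonzero coefficient is a nonzero integer. Then m > 1 / ((2A)^(d_u) · B^(d_{P,u})) = 1 / ((2^(τ_{P,u}+1) √(d_{P,u}+1))^(d_u) · (2^(τ_u) √(d_u+1))^(d_{P,u})). -/

import Mathlib

theorem min_lower_bound_from_resultant (R : Polynomial ℝ) (du dpu τu τpu : ℕ)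
    (m : ℝ) (hm : 0 < m) (hroot : R.eval m = 0) (hR : R ≠ 0)
    (hdeg : R.natDegree ≤ du)
    (hint : ∀ i, ∃ z : ℤ, R.coeff i = z)
    (hcoeff : ∀ i ≤ du, |R.coeff i| <
      (du.choose i) * ((2:ℝ) ^ τpu * Real.sqrt ((dpu : ℝ) + 1)) ^ du *
        ((2:ℝ) ^ τu * Real.sqrt ((du : ℝ) + 1)) ^ dpu) :
    1 / (((2:ℝ) ^ (τpu + 1) * Real.sqrt ((dpu : ℝ) + 1)) ^ du *
      ((2:ℝ) ^ τu * Real.sqrt ((du : ℝ) + 1)) ^ dpu) < m := by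
  set A : ℝ := (2:ℝ) ^ τpu * Real.sqrt ((dpu : ℝ) + 1) with hA_def
  set B : ℝ := (2:ℝ) ^ τu * Real.sqrt ((du : ℝ) + 1) with hB_def
  have hsq1 : (1:ℝ) ≤ Real.sqrt ((dpu:ℝ)+1) := by
    have h := Real.sqrt_le_sqrt (show (1:ℝ) ≤ (dpu:ℝ)+1 by linarith [Nat.cast_nonneg (α := ℝ) dpu])
    simpa using h
  have hsq2 : (1:ℝ) ≤ Real.sqrt ((du:ℝ)+1) := by
    have h := Real.sqrt_le_sqrt (show (1:ℝ) ≤ (du:ℝ)+1 by linarith [Nat.cast_nonneg (α := ℝ) du])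
    simpa using h
  have h2p1 : (1:ℝ) ≤ 2 ^ τpu := one_le_pow₀ (by norm_num)
  have h2p2 : (1:ℝ) ≤ 2 ^ τu := one_le_pow₀ (by norm_num)
  have hA1 : 1 ≤ A := by rw [hA_def]; nlinarith
  have hB1 : 1 ≤ B := by rw [hB_def]; nlinarith
  have hAB1 : 1 ≤ A ^ du * B ^ dpu := by
    have := one_le_pow₀ (n := du) hA1
    have := one_le_pow₀ (n := dpu) hB1
    nlinarith
  set M : ℝ := 2 ^ du * (A ^ du * B ^ dpu) with hM_def
  have hMgoal : (((2:ℝ) ^ (τpu + 1) * Real.sqrt ((dpu : ℝ) + 1)) ^ du *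
      B ^ dpu) = M := by
    rw [hM_def, hA_def]; ring
  rw [hMgoal]
  have hdu1 : 1 ≤ du := by
    by_contra h
    push_neg at h
    interval_cases du
    · have h0 : R.natDegree = 0 := Nat.le_zero.mp hdeg
      have hC := Polynomial.eq_C_of_natDegree_eq_zero h0
      rw [hC] at hroot hR
      simp at hroot
      rw [hroot] at hR
      simp at hR
  have hM2 : 2 ≤ M := by
    have h2d : (2:ℝ) ≤ 2 ^ du := by
      calc (2:ℝ) = 2 ^ 1 := by norm_num
      _ ≤ 2 ^ du := by exact pow_le_pow_right₀ (by norm_num) hdu1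
    nlinarith
  rcases le_or_gt 1 m with hm1 | hm1
  · have : 1 / M ≤ 1 / 2 := by
      apply one_div_le_one_div_of_le (by norm_num) hM2
    linarith
  · -- m < 1, main argument
    set k := R.natTrailingDegree with hk_def
    have hk_le : k ≤ du := le_trans (Polynomial.natTrailingDegree_le_natDegree R) hdeg
    have hrk : R.coeff k ≠ 0 := by
      rw [hk_def, ← Polynomial.trailingCoeff]
      exact Polynomial.trailingCoeff_nonzero_iff_nonzero.mpr hR
    have hrk1 : 1 ≤ |R.coeff k| := by
      obtain ⟨z, hz⟩ := hint k
      have hz0 : z ≠ 0 := by rintro rfl; simp at hz; exact hrk hz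
      rw [hz]
      have : (1:ℤ) ≤ |z| := Int.one_le_abs hz0
      calc (1:ℝ) ≤ (|z| : ℤ) := by exact_mod_cast this
      _ = |(z:ℝ)| := by push_cast; ring
    have hsum : ∑ i ∈ Finset.range (du+1), R.coeff i * m ^ i = 0 := by
      rw [← Polynomial.eval_eq_sum_range' (Nat.lt_succ_of_le hdeg)]; exact hroot
    have hkmem : k ∈ Finset.range (du+1) := Finset.mem_range.mpr (Nat.lt_succ_of_le hk_le)
    have hsplit : R.coeff k * m ^ k =
        -∑ i ∈ (Finset.range (du+1)).erase k, R.coeff i * m ^ i := by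
      have h := Finset.sum_erase_add (Finset.range (du+1)) (fun i => R.coeff i * m ^ i) hkmem
      rw [hsum] at h
      try simp only at h
      linarith
    set S : ℝ := ∑ i ∈ Finset.range (du+1), |R.coeff i| with hS_def
    have hbound : |R.coeff k| * m ^ k ≤ m ^ (k+1) * S := by
      calc |R.coeff k| * m ^ k = |R.coeff k * m ^ k| := by
            rw [abs_mul, abs_of_pos (pow_pos hm k)]
      _ = |∑ i ∈ (Finset.range (du+1)).erase k, R.coeff i * m ^ i| := by rw [hsplit]; rw [abs_neg]
      _ ≤ ∑ i ∈ (Finset.range (du+1)).erase k, |R.coeff i * m ^ i| := Finset.abs_sum_le_sum_abs _ _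
      _ ≤ ∑ i ∈ (Finset.range (du+1)).erase k, |R.coeff i| * m ^ (k+1) := by
            apply Finset.sum_le_sum
            intro i hi
            rw [abs_mul, abs_of_pos (pow_pos hm i)]
            rcases lt_or_ge i k with hik | hik
            · have : R.coeff i = 0 := Polynomial.coeff_eq_zero_of_lt_natTrailingDegree hik
              rw [this]; simp
            · have hik' : k + 1 ≤ i := by
                rcases lt_or_eq_of_le hik with h' | h'
                · omega
                · exfalso; exact (Finset.ne_of_mem_erase hi) h'.symm
              have : m ^ i ≤ m ^ (k+1) := pow_le_pow_of_le_one hm.le hm1.le hik'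
              exact mul_le_mul_of_nonneg_left this (abs_nonneg _)
      _ ≤ ∑ i ∈ Finset.range (du+1), |R.coeff i| * m ^ (k+1) := by
            apply Finset.sum_le_sum_of_subset_of_nonneg (Finset.erase_subset _ _)
            intro i _ _
            positivity
      _ = m ^ (k+1) * S := by
            rw [hS_def, Finset.mul_sum]
            exact Finset.sum_congr rfl fun i _ => by ring
    have hSlt : S < M := by
      rw [hS_def]
      calc ∑ i ∈ Finset.range (du+1), |R.coeff i|
          < ∑ i ∈ Finset.range (du+1), (du.choose i : ℝ) * A ^ du * B ^ dpu := by
            apply Finset.sum_lt_sum_of_nonempty ⟨0, Finset.mem_range.mpr (Nat.succ_pos du)⟩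
            intro i hi
            exact hcoeff i (Nat.lt_succ_iff.mp (Finset.mem_range.mp hi))
      _ = M := by
            rw [hM_def]
            have h : ∑ i ∈ Finset.range (du+1), (du.choose i : ℝ) * A ^ du * B ^ dpu
                = (∑ i ∈ Finset.range (du+1), (du.choose i : ℝ)) * (A ^ du * B ^ dpu) := by
              rw [Finset.sum_mul]
              exact Finset.sum_congr rfl fun i _ => by ring
            rw [h, ← Nat.cast_sum, Nat.sum_range_choose]
            push_cast
            ring
    have hkpos : 0 < m ^ k := pow_pos hm k
    have hmain : m ^ k < m ^ k * (m * M) := by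
      have h1 : (1:ℝ) * m ^ k ≤ |R.coeff k| * m ^ k :=
        mul_le_mul_of_nonneg_right hrk1 hkpos.le
      have h2 : m ^ (k+1) * S < m ^ (k+1) * M :=
        mul_lt_mul_of_pos_left hSlt (pow_pos hm _)
      have h3 : m ^ (k+1) * M = m ^ k * (m * M) := by ring
      linarith
    have h1M : 1 < m * M := by
      by_contra h
      push_neg at h
      nlinarith [mul_le_mul_of_nonneg_left h hkpos.le]
    rw [div_lt_iff₀ (by linarith : (0:ℝ) < M)]
    linarith
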